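/- Given sets S_i, S_j ⊆ [X] encoded as in the set-intersection reduction, the constructed query range of length |S_i| + |S_j| + |X|·(2t+2) (with t = n-i+j-1) contains a 1/(2|X|)-majority element if and only if S_i ∩ S_j ≠ ∅. -/

import Mathlib

/-- `B_q` (0-indexed `q`): the elements of `[X]` not in `S_q` followed by the
elements in `S_q` (each universe element listed once), tagged as non-dummies. -/
def setBlock (X : ℕ) (S : ℕ → Finset (Fin X)) (q : ℕ) : List (Fin X ⊕ ℕ) :=
  (((List.finRange X).filter (fun x => x ∉ S q))
      ++ ((List.finRange X).filter (fun x => x ∈ S q))).map Sum.inl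

/-- `C`: a block of `X` dummy symbols, each occurring exactly once in the whole
array (`b` is a unique block identifier). -/
def dummyBlock (X b : ℕ) : List (Fin X ⊕ ℕ) :=
  (List.range X).map (fun d => Sum.inr (b * X + d))

/-- The array of the set-intersection reduction:
`A = B_1·C·B_2·C·…·B_n·C·C·B_n^r·C·…·C·B_1^r·C`. -/
def siArr (X n : ℕ) (S : ℕ → Finset (Fin X)) : List (Fin X ⊕ ℕ) :=
  ((List.range n).flatMap (fun q => setBlock X S q ++ dummyBlock X q))
    ++ dummyBlock X n
    ++ ((List.range n).flatMap (fun q =>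
          (setBlock X S (n - 1 - q)).reverse ++ dummyBlock X (n + 1 + q)))

open List

instance sumLawfulBEq {α β} [BEq α] [BEq β] [LawfulBEq α] [LawfulBEq β] :
    LawfulBEq (α ⊕ β) where
  eq_of_beq {a b} h := by
    cases a <;> cases b
    · exact congrArg Sum.inl (eq_of_beq h)
    · exact Bool.noConfusion h
    · exact Bool.noConfusion h
    · exact congrArg Sum.inr (eq_of_beq h)
  rfl {a} := by
    cases a with
    | inl v => exact (ReflBEq.rfl (a := v))
    | inr v => exact (ReflBEq.rfl (a := v))

lemma count_map_inj {α β} [BEq α] [BEq β] [LawfulBEq α] [LawfulBEq β]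
    (l : List α) (f : α → β) (hf : Function.Injective f) (x : α) :
    (l.map f).count (f x) = l.count x := by
  induction l with
  | nil => simp
  | cons a t ih =>
    simp only [List.map_cons, List.count_cons, ih]
    congr 1
    by_cases h : a = x
    · simp [h]
    · simp [h, hf.ne h]

lemma filter_mem_length (X : ℕ) (T : Finset (Fin X)) :
    ((List.finRange X).filter (fun x => x ∈ T)).length = T.card := by
  conv_rhs => rw [← Finset.filter_univ_mem T, Fin.univ_def]
  simp [Finset.filter, Finset.card]

lemma filter_not_mem_length (X : ℕ) (T : Finset (Fin X)) :
    ((List.finRange X).filter (fun x => x ∉ T)).length = X - T.card := by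
  have h : ((List.finRange X).filter (fun x => x ∉ T))
      = ((List.finRange X).filter (fun x => x ∈ Tᶜ)) := by
    simp
  rw [h, filter_mem_length, Finset.card_compl, Fintype.card_fin]

lemma count_filter_finRange (X : ℕ) (p : Fin X → Bool) (x : Fin X) :
    (((List.finRange X).filter p).count x) = if p x then 1 else 0 := by
  by_cases h : p x
  · rw [List.count_filter h, if_pos h]
    exact List.count_eq_one_of_mem (List.nodup_finRange X) (List.mem_finRange x)
  · rw [if_neg h, List.count_eq_zero]
    simp only [List.mem_filter]
    rintro ⟨-, hp⟩; exact h hp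

lemma setBlock_length (X : ℕ) (S : ℕ → Finset (Fin X)) (q : ℕ) :
    (setBlock X S q).length = X := by
  have h1 : (S q).card ≤ X := by
    simpa using Finset.card_le_univ (S q)
  unfold setBlock
  rw [List.length_map, List.length_append, filter_mem_length, filter_not_mem_length]
  omega

lemma count_inl_setBlock (X : ℕ) (S : ℕ → Finset (Fin X)) (q : ℕ) (x : Fin X) :
    (setBlock X S q).count (Sum.inl x) = 1 := by
  unfold setBlock
  rw [count_map_inj _ Sum.inl Sum.inl_injective, List.count_append,
    count_filter_finRange, count_filter_finRange]
  by_cases h : x ∈ S q <;> simp [h]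

lemma count_inr_setBlock (X : ℕ) (S : ℕ → Finset (Fin X)) (q : ℕ) (d : ℕ) :
    (setBlock X S q).count (Sum.inr d) = 0 := by
  rw [List.count_eq_zero]
  simp [setBlock]

lemma dummyBlock_eq (X b : ℕ) : dummyBlock X b = (List.range' (b*X) X).map Sum.inr := by
  rw [List.range'_eq_map_range, List.map_map]; rfl

lemma dummyBlock_length (X b : ℕ) : (dummyBlock X b).length = X := by simp [dummyBlock]

lemma count_inl_dummyBlock (X b : ℕ) (x : Fin X) :
    (dummyBlock X b).count (Sum.inl x) = 0 := by
  rw [List.count_eq_zero]; simp [dummyBlock]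

lemma count_inr_dummyBlock (X b d : ℕ) :
    (dummyBlock X b).count (Sum.inr d) = if b*X ≤ d ∧ d < b*X + X then 1 else 0 := by
  rw [dummyBlock_eq, count_map_inj _ Sum.inr Sum.inr_injective]
  by_cases h : b*X ≤ d ∧ d < b*X + X
  · rw [if_pos h]
    refine List.count_eq_one_of_mem (List.nodup_range' 1) ?_
    rw [List.mem_range']
    exact ⟨d - b*X, by omega, by omega⟩
  · rw [if_neg h, List.count_eq_zero]
    intro hm
    rw [List.mem_range'] at hm
    obtain ⟨i, hi, rfl⟩ := hm
    omega

lemma sum_dummy_le_one (X d : ℕ) (l : List ℕ) (hl : l.Nodup) :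
    (l.map (fun b => if b*X ≤ d ∧ d < b*X + X then 1 else 0)).sum ≤ 1 := by
  induction l with
  | nil => simp
  | cons a t ih =>
    rw [List.map_cons, List.sum_cons]
    rcases List.nodup_cons.mp hl with ⟨ha, ht⟩
    by_cases h : a*X ≤ d ∧ d < a*X + X
    · rw [if_pos h]
      have hz : (t.map (fun b => if b*X ≤ d ∧ d < b*X + X then 1 else 0)).sum = 0 := by
        apply List.sum_eq_zero
        intro y hy
        rw [List.mem_map] at hy
        obtain ⟨b, hb, rfl⟩ := hy
        rw [if_neg]
        rintro ⟨h1, h2⟩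
        have hne : b ≠ a := fun e => ha (e ▸ hb)
        rcases Nat.lt_or_ge b a with hba | hba
        · have h3 : (b+1)*X ≤ a*X := Nat.mul_le_mul_right X hba
          have h4 : (b+1)*X = b*X + X := by ring
          linarith [h.1]
        · have hba' : a < b := by omega
          have h3 : (a+1)*X ≤ b*X := Nat.mul_le_mul_right X hba'
          have h4 : (a+1)*X = a*X + X := by ring
          linarith [h.2]
      omega
    · rw [if_neg h, Nat.zero_add]
      exact ih ht

lemma range'_split (a k : ℕ) :
    List.range' 0 (a+1+k) = List.range' 0 a ++ [a] ++ List.range' (a+1) k := by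
  have h1 := List.range'_append (s := 0) (m := a) (n := 1+k) (step := 1)
  have h2 := List.range'_append (s := a) (m := 1) (n := k) (step := 1)
  simp only [Nat.one_mul, Nat.zero_add] at h1 h2
  have e : a + 1 + k = a + (1 + k) := by omega
  rw [e, ← h1]
  rw [List.append_assoc]
  congr 1
  have e2 : 1 + k = 1 + k := by omega
  rw [e2, ← h2]
  congr 1

lemma count_inr_siArr (X n : ℕ) (S : ℕ → Finset (Fin X)) (d : ℕ) :
    (siArr X n S).count (Sum.inr d) ≤ 1 := by
  have key : (siArr X n S).count (Sum.inr d)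
      = ((List.range' 0 (2*n+1)).map (fun b => if b*X ≤ d ∧ d < b*X + X then 1 else 0)).sum := by
    unfold siArr
    rw [List.count_append, List.count_append, List.count_flatMap, List.count_flatMap]
    have e1 : (List.range n).map ((List.count (Sum.inr d)) ∘ (fun q => setBlock X S q ++ dummyBlock X q))
        = (List.range n).map (fun b => if b*X ≤ d ∧ d < b*X + X then 1 else 0) := by
      apply List.map_congr_left
      intro q _
      simp only [Function.comp_apply, List.count_append, count_inr_setBlock,
        count_inr_dummyBlock, Nat.zero_add]
    have e2 : (List.range n).map ((List.count (Sum.inr d)) ∘ (fun q => (setBlock X S (n-1-q)).reverse ++ dummyBlock X (n+1+q)))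
        = (List.range n).map (fun q => if (n+1+q)*X ≤ d ∧ d < (n+1+q)*X + X then 1 else 0) := by
      apply List.map_congr_left
      intro q _
      simp only [Function.comp_apply, List.count_append, List.count_reverse,
        count_inr_setBlock, count_inr_dummyBlock, Nat.zero_add]
    rw [e1, e2, count_inr_dummyBlock]
    have e3 : 2*n+1 = n+1+n := by omega
    rw [e3, range'_split n n, List.map_append, List.map_append, List.sum_append,
      List.sum_append, List.range_eq_range']
    have e4 : (List.range' (n+1) n).map (fun b => if b*X ≤ d ∧ d < b*X + X then 1 else 0)
        = (List.range n).map (fun q => if (n+1+q)*X ≤ d ∧ d < (n+1+q)*X + X then 1 else 0) := by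
      rw [List.range'_eq_map_range, List.map_map]
      rfl
    rw [e4]
    simp [List.range_eq_range']
  rw [key]
  exact sum_dummy_le_one X d _ (List.nodup_range' 1)

def memI (X : ℕ) (S : ℕ → Finset (Fin X)) (q : ℕ) : List (Fin X ⊕ ℕ) :=
  ((List.finRange X).filter (fun x => x ∈ S q)).map Sum.inl

def nonmemI (X : ℕ) (S : ℕ → Finset (Fin X)) (q : ℕ) : List (Fin X ⊕ ℕ) :=
  ((List.finRange X).filter (fun x => x ∉ S q)).map Sum.inl

lemma setBlock_eq (X : ℕ) (S : ℕ → Finset (Fin X)) (q : ℕ) :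
    setBlock X S q = nonmemI X S q ++ memI X S q := by
  unfold setBlock nonmemI memI; rw [List.map_append]

def siP (X : ℕ) (S : ℕ → Finset (Fin X)) (a : ℕ) : List (Fin X ⊕ ℕ) :=
  ((List.range' 0 a).flatMap (fun q => setBlock X S q ++ dummyBlock X q)) ++ nonmemI X S a

def siQ (X n : ℕ) (S : ℕ → Finset (Fin X)) (a k m b : ℕ) : List (Fin X ⊕ ℕ) :=
  memI X S a ++ dummyBlock X a
    ++ ((List.range' (a+1) k).flatMap (fun q => setBlock X S q ++ dummyBlock X q))
    ++ dummyBlock X n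
    ++ ((List.range' 0 m).flatMap (fun q => (setBlock X S (n-1-q)).reverse ++ dummyBlock X (n+1+q)))
    ++ (memI X S b).reverse

def siT (X n : ℕ) (S : ℕ → Finset (Fin X)) (m b : ℕ) : List (Fin X ⊕ ℕ) :=
  (nonmemI X S b).reverse ++ dummyBlock X (n+1+m)
    ++ ((List.range' (m+1) b).flatMap (fun q => (setBlock X S (n-1-q)).reverse ++ dummyBlock X (n+1+q)))

lemma siArr_decomp (X n : ℕ) (S : ℕ → Finset (Fin X)) (a k m b : ℕ)
    (h1 : n = a+1+k) (h2 : n = m+1+b) :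
    siArr X n S = siP X S a ++ (siQ X n S a k m b ++ siT X n S m b) := by
  have ha : List.range' 0 n = List.range' 0 a ++ [a] ++ List.range' (a+1) k := by
    rw [h1]; exact range'_split a k
  have hmm : List.range' 0 n = List.range' 0 m ++ [m] ++ List.range' (m+1) b := by
    rw [h2]; exact range'_split m b
  have hb : n - 1 - m = b := by omega
  unfold siArr siP siQ siT
  rw [List.range_eq_range']
  nth_rewrite 1 [ha]
  rw [hmm]
  rw [List.flatMap_append, List.flatMap_append, List.flatMap_append, List.flatMap_append]
  simp only [List.flatMap_cons, List.flatMap_nil, List.append_nil]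
  rw [hb, setBlock_eq X S a, setBlock_eq X S b, List.reverse_append]
  simp only [List.append_assoc]

lemma memI_length (X : ℕ) (S : ℕ → Finset (Fin X)) (q : ℕ) :
    (memI X S q).length = (S q).card := by
  unfold memI; rw [List.length_map, filter_mem_length]

lemma nonmemI_length (X : ℕ) (S : ℕ → Finset (Fin X)) (q : ℕ) :
    (nonmemI X S q).length = X - (S q).card := by
  unfold nonmemI; rw [List.length_map, filter_not_mem_length]

lemma flatMapF_length (X : ℕ) (S : ℕ → Finset (Fin X)) (s k : ℕ) :
    ((List.range' s k).flatMap (fun q => setBlock X S q ++ dummyBlock X q)).length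
      = k * (2*X) := by
  rw [List.length_flatMap]
  have h : ∀ q ∈ List.range' s k,
      (List.length ∘ fun q => setBlock X S q ++ dummyBlock X q) q = 2*X := by
    intro q _
    simp only [Function.comp_apply, List.length_append, setBlock_length, dummyBlock_length]
    omega
  rw [List.map_congr_left (f := fun a => (setBlock X S a ++ dummyBlock X a).length) h,
    List.map_const', List.sum_replicate, smul_eq_mul,
    List.length_range']

lemma flatMapG_length (X n : ℕ) (S : ℕ → Finset (Fin X)) (s k : ℕ) :
    ((List.range' s k).flatMap
        (fun q => (setBlock X S (n-1-q)).reverse ++ dummyBlock X (n+1+q))).length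
      = k * (2*X) := by
  rw [List.length_flatMap]
  have h : ∀ q ∈ List.range' s k,
      (List.length ∘ fun q => (setBlock X S (n-1-q)).reverse ++ dummyBlock X (n+1+q)) q
        = 2*X := by
    intro q _
    simp only [Function.comp_apply, List.length_append, List.length_reverse,
      setBlock_length, dummyBlock_length]
    omega
  rw [List.map_congr_left
      (f := fun a => ((setBlock X S (n - 1 - a)).reverse ++ dummyBlock X (n + 1 + a)).length) h,
    List.map_const', List.sum_replicate, smul_eq_mul,
    List.length_range']

lemma siP_length (X : ℕ) (S : ℕ → Finset (Fin X)) (a : ℕ) :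
    (siP X S a).length = a * (2*X) + (X - (S a).card) := by
  unfold siP
  rw [List.length_append, flatMapF_length, nonmemI_length]

lemma siQ_length (X n : ℕ) (S : ℕ → Finset (Fin X)) (a k m b : ℕ) :
    (siQ X n S a k m b).length
      = (S a).card + X + k*(2*X) + X + m*(2*X) + (S b).card := by
  unfold siQ
  rw [List.length_append, List.length_append, List.length_append, List.length_append,
    List.length_append, List.length_reverse, memI_length, memI_length,
    dummyBlock_length, dummyBlock_length, flatMapF_length, flatMapG_length]

lemma memI_count (X : ℕ) (S : ℕ → Finset (Fin X)) (q : ℕ) (x : Fin X) :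
    (memI X S q).count (Sum.inl x) = if x ∈ S q then 1 else 0 := by
  unfold memI
  rw [count_map_inj _ Sum.inl Sum.inl_injective, count_filter_finRange]
  by_cases h : x ∈ S q <;> simp [h]

lemma flatMapF_count (X : ℕ) (S : ℕ → Finset (Fin X)) (s k : ℕ) (x : Fin X) :
    ((List.range' s k).flatMap (fun q => setBlock X S q ++ dummyBlock X q)).count
      (Sum.inl x) = k := by
  rw [List.count_flatMap]
  have h : ∀ q ∈ List.range' s k,
      ((List.count (Sum.inl x)) ∘ fun q => setBlock X S q ++ dummyBlock X q) q = 1 := by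
    intro q _
    simp only [Function.comp_apply, List.count_append, count_inl_setBlock,
      count_inl_dummyBlock]
  rw [List.map_congr_left h, List.map_const', List.sum_replicate, smul_eq_mul,
    List.length_range', Nat.mul_one]

lemma flatMapG_count (X n : ℕ) (S : ℕ → Finset (Fin X)) (s k : ℕ) (x : Fin X) :
    ((List.range' s k).flatMap
        (fun q => (setBlock X S (n-1-q)).reverse ++ dummyBlock X (n+1+q))).count
      (Sum.inl x) = k := by
  rw [List.count_flatMap]
  have h : ∀ q ∈ List.range' s k,
      ((List.count (Sum.inl x)) ∘
        fun q => (setBlock X S (n-1-q)).reverse ++ dummyBlock X (n+1+q)) q = 1 := by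
    intro q _
    simp only [Function.comp_apply, List.count_append, List.count_reverse,
      count_inl_setBlock, count_inl_dummyBlock]
  rw [List.map_congr_left h, List.map_const', List.sum_replicate, smul_eq_mul,
    List.length_range', Nat.mul_one]

lemma siQ_count_inl (X n : ℕ) (S : ℕ → Finset (Fin X)) (a k m b : ℕ) (x : Fin X) :
    (siQ X n S a k m b).count (Sum.inl x)
      = (if x ∈ S a then 1 else 0) + k + m + (if x ∈ S b then 1 else 0) := by
  unfold siQ
  rw [List.count_append, List.count_append, List.count_append, List.count_append,
    List.count_append, List.count_reverse, memI_count, memI_count,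
    count_inl_dummyBlock, count_inl_dummyBlock, flatMapF_count, flatMapG_count]
  omega

/-- The constructed query range (for `1 ≤ i, j ≤ n`, 1-indexed) starts at the
first character of `B_i` encoding an element of `S_i` and ends at the last
character of `B_j^r` encoding an element of `S_j`.  It contains a
`1/(2X)`-majority element iff `S_i ∩ S_j ≠ ∅`. -/
theorem stmt_16 (X n : ℕ) (S : ℕ → Finset (Fin X)) (i j : ℕ)
    (hi1 : 1 ≤ i) (hin : i ≤ n) (hj1 : 1 ≤ j) (hjn : j ≤ n)
    (hSi : (S (i - 1)).Nonempty) (hSj : (S (j - 1)).Nonempty) :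
    (∃ y : Fin X ⊕ ℕ,
        (((siArr X n S).drop ((i - 1) * (2 * X) + (X - (S (i - 1)).card))).take
            ((2 * n * X + X + (n - j) * (2 * X) + (S (j - 1)).card - 1)
              - ((i - 1) * (2 * X) + (X - (S (i - 1)).card)) + 1)).length
          ≤ 2 * X *
            ((((siArr X n S).drop ((i - 1) * (2 * X) + (X - (S (i - 1)).card))).take
                ((2 * n * X + X + (n - j) * (2 * X) + (S (j - 1)).card - 1)
                  - ((i - 1) * (2 * X) + (X - (S (i - 1)).card)) + 1)).count y))
      ↔ (S (i - 1) ∩ S (j - 1)).Nonempty := by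
  obtain ⟨a, rfl⟩ : ∃ a, i = a + 1 := ⟨i - 1, by omega⟩
  obtain ⟨b, rfl⟩ : ∃ b, j = b + 1 := ⟨j - 1, by omega⟩
  simp only [Nat.add_sub_cancel] at hSi hSj ⊢
  set k := n - (a+1) with hk
  set m := n - (b+1) with hm
  have h1 : n = a+1+k := by omega
  have h2 : n = m+1+b := by omega
  have hca1 : 1 ≤ (S a).card := Finset.Nonempty.card_pos hSi
  have hcb1 : 1 ≤ (S b).card := Finset.Nonempty.card_pos hSj
  have hcaX : (S a).card ≤ X := by simpa using Finset.card_le_univ (S a)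
  have hcbX : (S b).card ≤ X := by simpa using Finset.card_le_univ (S b)
  have hdec := siArr_decomp X n S a k m b h1 h2
  have hdrop : (siArr X n S).drop (a * (2*X) + (X - (S a).card))
      = siQ X n S a k m b ++ siT X n S m b := by
    rw [hdec]; exact List.drop_left' (siP_length X S a)
  have hQlen : (siQ X n S a k m b).length
      = (2*n*X + X + m*(2*X) + (S b).card - 1)
          - (a*(2*X) + (X - (S a).card)) + 1 := by
    rw [siQ_length]
    have hnX : 2*n*X = a*(2*X) + 2*X + k*(2*X) := by rw [h1]; ring
    rw [hnX]
    generalize a*(2*X) = A1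
    generalize k*(2*X) = A2
    generalize m*(2*X) = A3
    omega
  have hlist : ((siArr X n S).drop (a * (2*X) + (X - (S a).card))).take
      ((2*n*X + X + m*(2*X) + (S b).card - 1)
        - (a*(2*X) + (X - (S a).card)) + 1) = siQ X n S a k m b := by
    rw [hdrop]; exact List.take_left' hQlen
  have hsub : siQ X n S a k m b <+ siArr X n S := by
    rw [← hlist]
    exact ((List.take_prefix _ _).sublist).trans ((List.drop_suffix _ _).sublist)
  rw [hlist]
  constructor
  · rintro ⟨y, hy⟩
    rw [siQ_length] at hy
    rcases y with x | d
    · rw [siQ_count_inl] at hy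
      by_cases hxa : x ∈ S a <;> by_cases hxb : x ∈ S b
      · exact ⟨x, Finset.mem_inter.mpr ⟨hxa, hxb⟩⟩
      · exfalso; simp only [hxa, hxb, if_true, if_false] at hy
        have he : 2*X*(1 + k + m + 0) = 2*X + k*(2*X) + m*(2*X) := by ring
        rw [he] at hy
        linarith
      · exfalso; simp only [hxa, hxb, if_true, if_false] at hy
        have he : 2*X*(0 + k + m + 1) = 2*X + k*(2*X) + m*(2*X) := by ring
        rw [he] at hy
        linarith
      · exfalso; simp only [hxa, hxb, if_true, if_false] at hy
        have he : 2*X*(0 + k + m + 0) = k*(2*X) + m*(2*X) := by ring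
        rw [he] at hy
        linarith
    · exfalso
      have hc1 : (siQ X n S a k m b).count (Sum.inr d) ≤ 1 :=
        le_trans (hsub.count_le _) (count_inr_siArr X n S d)
      have h2X : 2*X*((siQ X n S a k m b).count (Sum.inr d)) ≤ 2*X := by
        calc 2*X*((siQ X n S a k m b).count (Sum.inr d)) ≤ 2*X*1 :=
              Nat.mul_le_mul_left _ hc1
          _ = 2*X := Nat.mul_one _
      linarith [Nat.zero_le (k*(2*X)), Nat.zero_le (m*(2*X)), le_trans hy h2X]
  · rintro ⟨x, hx⟩
    rw [Finset.mem_inter] at hx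
    refine ⟨Sum.inl x, ?_⟩
    rw [siQ_length, siQ_count_inl, if_pos hx.1, if_pos hx.2]
    have he : 2*X*(1 + k + m + 1) = 2*X + k*(2*X) + m*(2*X) + 2*X := by ring
    rw [he]
    linarith
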